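/- Let λ > 0. Define r, t : ℝ → ℝ by r(φ) = arsinh(sinh(λ) · sin(φ)) and t(φ) = arcosh(cosh(λ) / cosh(r(φ))). Then for every φ ∈ (−π/2, π/2): (i) cosh(r(φ)) · cosh(t(φ)) = cosh(λ) and t(φ) ≥ 0; and (ii) r and t are differentiable at φ with r'(φ)² + cosh²(r(φ)) · t'(φ)² = sinh²(λ). -/

import Mathlib

open Real

/-- The inverse hyperbolic cosine. -/
noncomputable def arcosh (x : ℝ) : ℝ := Real.log (x + Real.sqrt (x ^ 2 - 1))

/-- `r(φ) = arsinh(sinh λ · sin φ)`. -/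
noncomputable def rCoord (lam φ : ℝ) : ℝ := Real.arsinh (Real.sinh lam * Real.sin φ)

/-- `t(φ) = arcosh(cosh λ / cosh r(φ))`. -/
noncomputable def tCoord (lam φ : ℝ) : ℝ := _root_.arcosh (Real.cosh lam / Real.cosh (rCoord lam φ))

lemma cosh_arcosh {x : ℝ} (hx : 1 ≤ x) : Real.cosh (_root_.arcosh x) = x := by
  have h1 : (0:ℝ) ≤ x ^ 2 - 1 := by nlinarith
  have hs : Real.sqrt (x ^ 2 - 1) ^ 2 = x ^ 2 - 1 := Real.sq_sqrt h1
  have hsn : 0 ≤ Real.sqrt (x ^ 2 - 1) := Real.sqrt_nonneg _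
  have hy : 0 < x + Real.sqrt (x ^ 2 - 1) := by linarith
  rw [_root_.arcosh, Real.cosh_eq, Real.exp_log hy, ← Real.log_inv, Real.exp_log (by positivity)]
  field_simp
  nlinarith

lemma arcosh_nonneg {x : ℝ} (hx : 1 ≤ x) : 0 ≤ _root_.arcosh x := by
  apply Real.log_nonneg
  have := Real.sqrt_nonneg (x ^ 2 - 1)
  linarith

lemma hasDerivAt_arcosh {x : ℝ} (hx : 1 < x) :
    HasDerivAt _root_.arcosh (Real.sqrt (x ^ 2 - 1))⁻¹ x := by
  have h1 : (0:ℝ) < x ^ 2 - 1 := by nlinarith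
  have hS : 0 < Real.sqrt (x ^ 2 - 1) := Real.sqrt_pos.2 h1
  have hSq : Real.sqrt (x ^ 2 - 1) ^ 2 = x ^ 2 - 1 := Real.sq_sqrt h1.le
  have hinner : HasDerivAt (fun y : ℝ => y ^ 2 - 1) (2 * x) x := by
    simpa using ((hasDerivAt_pow 2 x).sub_const 1)
  have hsqrt : HasDerivAt (fun y : ℝ => Real.sqrt (y ^ 2 - 1))
      (1 / (2 * Real.sqrt (x ^ 2 - 1)) * (2 * x)) x :=
    (Real.hasDerivAt_sqrt h1.ne').comp x hinner
  have hf : HasDerivAt (fun y : ℝ => y + Real.sqrt (y ^ 2 - 1))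
      (1 + 1 / (2 * Real.sqrt (x ^ 2 - 1)) * (2 * x)) x :=
    (hasDerivAt_id x).add hsqrt
  have hne : x + Real.sqrt (x ^ 2 - 1) ≠ 0 := by positivity
  have := hf.log hne
  refine this.congr_deriv (Eq.symm ?_)
  field_simp
  nlinarith

theorem stmt_7 (lam : ℝ) (hlam : 0 < lam) :
    ∀ φ ∈ Set.Ioo (-(π / 2)) (π / 2),
      (Real.cosh (rCoord lam φ) * Real.cosh (tCoord lam φ) = Real.cosh lam ∧
        0 ≤ tCoord lam φ) ∧
      DifferentiableAt ℝ (rCoord lam) φ ∧ DifferentiableAt ℝ (tCoord lam) φ ∧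
      deriv (rCoord lam) φ ^ 2 + Real.cosh (rCoord lam φ) ^ 2 * deriv (tCoord lam) φ ^ 2 =
        Real.sinh lam ^ 2 := by
  intro φ hφ
  set s := Real.sinh lam with hs
  have hs0 : 0 < s := Real.sinh_pos_iff.2 hlam
  have hcos : 0 < Real.cos φ := Real.cos_pos_of_mem_Ioo (by simpa using hφ)
  have hsin2 : Real.sin φ ^ 2 < 1 := by
    nlinarith [Real.sin_sq_add_cos_sq φ]
  set C := Real.cosh (rCoord lam φ) with hC
  have hC0 : 0 < C := Real.cosh_pos _
  have hsinr : Real.sinh (rCoord lam φ) = s * Real.sin φ := Real.sinh_arsinh _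
  have hC2 : C ^ 2 = 1 + s ^ 2 * Real.sin φ ^ 2 := by
    have h := Real.cosh_sq' (rCoord lam φ)
    rw [hsinr] at h
    rw [hC, h]; ring
  have hcl : Real.cosh lam ^ 2 = 1 + s ^ 2 := by
    rw [Real.cosh_sq', hs]
  have hcl0 : 0 < Real.cosh lam := Real.cosh_pos _
  have hCcl : C < Real.cosh lam := by
    have h : C ^ 2 < Real.cosh lam ^ 2 := by nlinarith [mul_pos (pow_pos hs0 2) (sub_pos.2 hsin2)]
    exact lt_of_pow_lt_pow_left₀ 2 hcl0.le h
  set u := Real.cosh lam / C with hu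
  have hu1 : 1 < u := (one_lt_div hC0).2 hCcl
  -- u^2 - 1 and its sqrt
  have hu21 : u ^ 2 - 1 = s ^ 2 * Real.cos φ ^ 2 / C ^ 2 := by
    rw [hu, div_pow, hcl]
    field_simp
    nlinarith [Real.sin_sq_add_cos_sq φ]
  have hS : Real.sqrt (u ^ 2 - 1) = s * Real.cos φ / C := by
    rw [hu21]
    rw [show s ^ 2 * Real.cos φ ^ 2 / C ^ 2 = (s * Real.cos φ / C) ^ 2 by ring]
    exact Real.sqrt_sq (by positivity)
  -- part (i)
  have hcosht : Real.cosh (tCoord lam φ) = u := _root_.cosh_arcosh hu1.le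
  have part1 : Real.cosh (rCoord lam φ) * Real.cosh (tCoord lam φ) = Real.cosh lam := by
    rw [hcosht, hu]; field_simp; rfl
  have part2 : 0 ≤ tCoord lam φ := _root_.arcosh_nonneg hu1.le
  -- derivative of rCoord
  have hrder : HasDerivAt (rCoord lam) (s * Real.cos φ / C) φ := by
    have hinner : HasDerivAt (fun y : ℝ => s * Real.sin y) (s * Real.cos φ) φ :=
      (Real.hasDerivAt_sin φ).const_mul s
    have := (Real.hasDerivAt_arsinh (s * Real.sin φ)).comp φ hinner
    have hCeq : Real.sqrt (1 + (s * Real.sin φ) ^ 2) = C := by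
      rw [hC]; simp [rCoord, Real.cosh_arsinh, hs]
    refine this.congr_deriv (Eq.symm ?_)
    rw [hCeq]; ring
  -- derivative of C as function of φ, i.e. of cosh ∘ rCoord
  have hCder : HasDerivAt (fun y => Real.cosh (rCoord lam y))
      (s * Real.sin φ * (s * Real.cos φ / C)) φ := by
    have := (Real.hasDerivAt_cosh (rCoord lam φ)).comp φ hrder
    exact this.congr_deriv (by rw [hsinr])
  -- derivative of u
  have hCne : C ≠ 0 := hC0.ne'
  have huder : HasDerivAt (fun y => Real.cosh lam / Real.cosh (rCoord lam y))
      (-(Real.cosh lam * (s * Real.sin φ * (s * Real.cos φ / C))) / C ^ 2) φ := by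
    have := (hasDerivAt_const φ (Real.cosh lam)).div hCder hCne
    refine this.congr_deriv (Eq.symm ?_)
    ring
  -- derivative of tCoord
  have htder : HasDerivAt (tCoord lam)
      ((Real.sqrt (u ^ 2 - 1))⁻¹ *
        (-(Real.cosh lam * (s * Real.sin φ * (s * Real.cos φ / C))) / C ^ 2)) φ :=
    (_root_.hasDerivAt_arcosh hu1).comp φ huder
  have hrd := hrder.deriv
  have htd := htder.deriv
  refine ⟨⟨part1, part2⟩, hrder.differentiableAt, htder.differentiableAt, ?_⟩
  have htd2 : deriv (tCoord lam) φ = -(Real.cosh lam * s * Real.sin φ) / C ^ 2 := by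
    rw [htd, hS]
    have hscos : s * Real.cos φ ≠ 0 := by positivity
    field_simp
  have key : (s * Real.cos φ) ^ 2 + (Real.cosh lam * s * Real.sin φ) ^ 2 = s ^ 2 * C ^ 2 := by
    have hpyth := Real.sin_sq_add_cos_sq φ
    linear_combination s ^ 2 * Real.sin φ ^ 2 * hcl - s ^ 2 * hC2 + s ^ 2 * hpyth
  rw [hrd, htd2]
  have heq : (s * Real.cos φ / C) ^ 2 +
      C ^ 2 * (-(Real.cosh lam * s * Real.sin φ) / C ^ 2) ^ 2 =
      ((s * Real.cos φ) ^ 2 + (Real.cosh lam * s * Real.sin φ) ^ 2) / C ^ 2 := by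
    field_simp
  rw [heq, key, mul_div_assoc, div_self (by positivity), mul_one]
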